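/- Under the assumptions of the general performance-difference identity and the Wasserstein bound (Q^τ is L_Q-Lipschitz in actions, b a belief kernel satisfying the kernel-commutation property), the Q-value difference satisfies E_{a∼π(·|x), x^τ∼b(·|x)}[Q^τ(x^τ,a) − Q^π(x,a)] ≤ (γ L_Q/(1−γ)) · E_{a∼π(·|x), x'∼P(·|x,a), x̂∼d^π_{x'}, x̂^τ∼b(·|x̂)}[W₁(π^τ(·|x̂^τ), π(·|x̂))] for every state x. -/

import Mathlib

open scoped ENNReal

/-- Expectation of a real-valued function under a `PMF` on a finite type. -/
noncomputable def Epmf {α : Type*} [Fintype α] (μ : PMF α) (f : α → ℝ) : ℝ :=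
  ∑ a, (μ a).toReal * f a

/-- The L1-Wasserstein distance between two probability distributions on a finite
metric space, defined via couplings. -/
noncomputable def W1 {α : Type*} [Fintype α] [MetricSpace α] (μ ν : PMF α) : ℝ :=
  sInf { c | ∃ κ : PMF (α × α), PMF.map Prod.fst κ = μ ∧ PMF.map Prod.snd κ = ν ∧
      Epmf κ (fun p => dist p.1 p.2) = c }

section AuxLemmas

variable {α β : Type*} [Fintype α] [Fintype β]

lemma Epmf_sum_one (μ : PMF α) : ∑ a, (μ a).toReal = 1 := by
  rw [← ENNReal.toReal_sum (fun a _ => μ.apply_ne_top a), ← tsum_fintype (L := .unconditional _), μ.tsum_coe,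
    ENNReal.toReal_one]

lemma Epmf_const (μ : PMF α) (c : ℝ) : Epmf μ (fun _ => c) = c := by
  simp [Epmf, ← Finset.sum_mul, Epmf_sum_one]

lemma Epmf_mono (μ : PMF α) {f g : α → ℝ} (h : ∀ a, f a ≤ g a) :
    Epmf μ f ≤ Epmf μ g :=
  Finset.sum_le_sum fun a _ => mul_le_mul_of_nonneg_left (h a) ENNReal.toReal_nonneg

lemma Epmf_le (μ : PMF α) {f : α → ℝ} {M : ℝ} (h : ∀ a, f a ≤ M) :
    Epmf μ f ≤ M := (Epmf_mono μ h).trans_eq (Epmf_const μ M)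

lemma Epmf_add (μ : PMF α) (f g : α → ℝ) :
    Epmf μ (fun a => f a + g a) = Epmf μ f + Epmf μ g := by
  simp [Epmf, mul_add, Finset.sum_add_distrib]

lemma Epmf_sub (μ : PMF α) (f g : α → ℝ) :
    Epmf μ (fun a => f a - g a) = Epmf μ f - Epmf μ g := by
  simp [Epmf, mul_sub, Finset.sum_sub_distrib]

lemma Epmf_smul (μ : PMF α) (c : ℝ) (f : α → ℝ) :
    Epmf μ (fun a => c * f a) = c * Epmf μ f := by
  simp only [Epmf, Finset.mul_sum]; congr 1; ext a; ring

lemma abs_Epmf_le (μ : PMF α) {f : α → ℝ} {M : ℝ} (h : ∀ a, |f a| ≤ M) :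
    |Epmf μ f| ≤ M := by
  rw [abs_le]
  refine ⟨?_, Epmf_le μ fun a => (abs_le.1 (h a)).2⟩
  have := Epmf_mono μ (f := fun _ => -M) (g := f) (fun a => (abs_le.1 (h a)).1)
  rwa [Epmf_const] at this

lemma Epmf_comm (μ : PMF α) (ν : PMF β) (g : α → β → ℝ) :
    Epmf μ (fun a => Epmf ν (g a)) = Epmf ν (fun b => Epmf μ (fun a => g a b)) := by
  simp only [Epmf, Finset.mul_sum]
  rw [Finset.sum_comm]
  congr 1; ext b; congr 1; ext a; ring

lemma Epmf_map (μ : PMF α) (g : α → β) (f : β → ℝ) :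
    Epmf (PMF.map g μ) f = Epmf μ (fun a => f (g a)) := by
  classical
  simp only [Epmf, PMF.map_apply, tsum_fintype]
  have h1 : ∀ b : β, ((∑ a, if b = g a then μ a else 0)).toReal
      = ∑ a, if b = g a then (μ a).toReal else 0 := by
    intro b
    rw [ENNReal.toReal_sum]
    · exact Finset.sum_congr rfl fun a _ => by split <;> simp
    · intro a _; split
      · exact μ.apply_ne_top a
      · simp
  simp only [h1, Finset.sum_mul, ite_mul, zero_mul]
  rw [Finset.sum_comm]
  refine Finset.sum_congr rfl fun a _ => ?_
  simp

lemma Epmf_diff_le_W1 {A : Type*} [Fintype A] [MetricSpace A] (μ ν : PMF A)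
    (f : A → ℝ) (L : ℝ) (h : ∀ a₁ a₂, |f a₁ - f a₂| ≤ L * dist a₁ a₂) :
    Epmf μ f - Epmf ν f ≤ L * W1 μ ν := by
  classical
  unfold W1
  set S := { c | ∃ κ : PMF (A × A), PMF.map Prod.fst κ = μ ∧ PMF.map Prod.snd κ = ν ∧
      Epmf κ (fun p => dist p.1 p.2) = c } with hS
  set κ₀ := μ.bind (fun a => ν.map (Prod.mk a)) with hκ₀
  have hfst : PMF.map Prod.fst κ₀ = μ := by
    rw [hκ₀, PMF.map_bind]
    simp only [PMF.map_comp]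
    have : ∀ a : A, (Prod.fst ∘ Prod.mk a : A → A) = Function.const A a := fun a => rfl
    simp only [this, PMF.map_const, PMF.bind_pure]
  have hsnd : PMF.map Prod.snd κ₀ = ν := by
    rw [hκ₀, PMF.map_bind]
    simp only [PMF.map_comp]
    have : ∀ a : A, (Prod.snd ∘ Prod.mk a : A → A) = id := fun a => rfl
    simp only [this, PMF.map_id, PMF.bind_const]
  have hmem : Epmf κ₀ (fun p => dist p.1 p.2) ∈ S := ⟨κ₀, hfst, hsnd, rfl⟩
  have hne : S.Nonempty := ⟨_, hmem⟩
  have hbd : ∀ c ∈ S, Epmf μ f - Epmf ν f ≤ L * c := by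
    rintro c ⟨κ, h1, h2, rfl⟩
    rw [← h1, ← h2, Epmf_map, Epmf_map, ← Epmf_sub, ← Epmf_smul]
    exact Epmf_mono κ fun p => (le_abs_self _).trans (h p.1 p.2)
  by_cases hsub : ∀ a₁ a₂ : A, a₁ = a₂
  · have hz : ∀ c ∈ S, c = (0:ℝ) := by
      rintro c ⟨κ, -, -, rfl⟩
      have hd0 : ∀ p : A × A, dist p.1 p.2 = 0 := fun p => by
        rw [hsub p.1 p.2, dist_self]
      calc Epmf κ (fun p => dist p.1 p.2) = Epmf κ (fun _ => (0:ℝ)) := by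
            simp only [hd0]
        _ = 0 := Epmf_const κ 0
    have hSinf : sInf S = 0 := by
      have h0 : (0:ℝ) ∈ S := hz _ hmem ▸ hmem
      exact le_antisymm (csInf_le ⟨0, fun c hc => (hz c hc).ge⟩ h0)
        (le_csInf hne fun c hc => (hz c hc).ge)
    rw [hSinf, mul_zero]
    have := hbd _ hmem
    rwa [hz _ hmem, mul_zero] at this
  · push_neg at hsub
    obtain ⟨a₁, a₂, hne2⟩ := hsub
    have hL : 0 ≤ L := by
      have hdp : 0 < dist a₁ a₂ := dist_pos.2 hne2
      nlinarith [abs_nonneg (f a₁ - f a₂), h a₁ a₂]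
    rcases eq_or_lt_of_le hL with hL0 | hLpos
    · have := hbd _ hmem
      rw [← hL0] at this ⊢
      simpa using this
    · rw [mul_comm, ← div_le_iff₀ hLpos]
      refine le_csInf hne fun c hc => ?_
      rw [div_le_iff₀ hLpos, mul_comm]
      exact hbd c hc

lemma fixpoint_zero {X A : Type*} [Fintype X] [Fintype A] [Nonempty X] {γ : ℝ}
    (hγ0 : 0 < γ) (hγ1 : γ < 1) (π : X → PMF A) (P : X → A → PMF X) (g : X → ℝ)
    (hrec : ∀ x, g x = γ * Epmf (π x) (fun a => Epmf (P x a) g)) : ∀ x, g x = 0 := by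
  set M := Finset.univ.sup' Finset.univ_nonempty (fun y : X => |g y|) with hM
  have hMle : ∀ y, |g y| ≤ M := by
    intro y; rw [hM]; exact Finset.le_sup' (fun y : X => |g y|) (Finset.mem_univ y)
  have hstep : ∀ y : X, |g y| ≤ γ * M := by
    intro y
    rw [hrec y, abs_mul, abs_of_pos hγ0]
    exact mul_le_mul_of_nonneg_left
      (abs_Epmf_le _ fun a => abs_Epmf_le _ fun z => hMle z) hγ0.le
  have hMM : M ≤ γ * M := Finset.sup'_le _ _ fun y _ => hstep y
  have hM0 : 0 ≤ M := (abs_nonneg _).trans (hMle (Classical.arbitrary X))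
  have hMz : M ≤ 0 := by nlinarith
  intro y
  exact abs_eq_zero.1 (le_antisymm ((hMle y).trans hMz) (abs_nonneg _))

end AuxLemmas

/-- Delayed Q-value difference bound: under the linked-MDP assumptions (reward matching,
kernel commutation, discounted visitation `d`) and `L_Q`-Lipschitzness of `Qτ` in actions,
`E_{a∼π(·|x), xτ∼b(·|x)}[Qτ(xτ,a) − Q(x,a)]` is bounded by
`(γ L_Q/(1−γ))` times the expected Wasserstein discrepancy between `πτ` and `π` along
the discounted visitation distribution started from the next state. -/
theorem delayed_q_value_difference_bound
    {X Xτ A : Type*} [Fintype X] [Fintype Xτ] [Fintype A] [MetricSpace A]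
    (γ : ℝ) (hγ0 : 0 < γ) (hγ1 : γ < 1)
    (π : X → PMF A) (πτ : Xτ → PMF A)
    (P : X → A → PMF X) (Pτ : Xτ → A → PMF Xτ) (b : X → PMF Xτ)
    (R : X → A → ℝ) (Rτ : Xτ → A → ℝ)
    (V : X → ℝ) (Vτ : Xτ → ℝ) (Q : X → A → ℝ) (Qτ : Xτ → A → ℝ)
    (d : X → PMF X) (LQ : ℝ)
    (hLip : ∀ (xτ : Xτ) (a₁ a₂ : A), |Qτ xτ a₁ - Qτ xτ a₂| ≤ LQ * dist a₁ a₂)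
    (hV : ∀ x, V x = Epmf (π x) (fun a => R x a + γ * Epmf (P x a) V))
    (hQ : ∀ x a, Q x a = R x a + γ * Epmf (P x a) V)
    (hVτ : ∀ xτ, Vτ xτ = Epmf (πτ xτ) (fun a => Qτ xτ a))
    (hQτ : ∀ xτ a, Qτ xτ a = Rτ xτ a + γ * Epmf (Pτ xτ a) Vτ)
    (hR : ∀ x a, R x a = Epmf (b x) (fun xτ => Rτ xτ a))
    (hcomm : ∀ x a (f : Xτ → ℝ),
      Epmf (b x) (fun xτ => Epmf (Pτ xτ a) f)
        = Epmf (P x a) (fun x' => Epmf (b x') f))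
    (hd : ∀ x₀ (f : X → ℝ),
      Epmf (d x₀) f
        = (1 - γ) * f x₀
          + γ * Epmf (π x₀) (fun a => Epmf (P x₀ a) (fun x' => Epmf (d x') f))) :
    ∀ x : X,
      Epmf (π x) (fun a => Epmf (b x) (fun xτ => Qτ xτ a) - Q x a)
        ≤ (γ * LQ / (1 - γ)) *
            Epmf (π x) (fun a =>
              Epmf (P x a) (fun x' =>
                Epmf (d x') (fun xhat =>
                  Epmf (b xhat) (fun xhatτ => W1 (πτ xhatτ) (π xhat))))) := by
  intro x
  haveI : Nonempty X := ⟨x⟩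
  have h1γ : (0:ℝ) < 1 - γ := by linarith
  -- abbreviations
  set Δ : X → ℝ := fun z => Epmf (b z) Vτ - V z with hΔdef
  set D : X → ℝ := fun z => Epmf (b z)
      (fun xτ => Epmf (πτ xτ) (fun a => Qτ xτ a) - Epmf (π z) (fun a => Qτ xτ a)) with hDdef
  set Φ : X → ℝ := fun z => (1 / (1 - γ)) * Epmf (d z) D with hΦdef
  -- Step A : value gap at (x,a)
  have hA : ∀ (y : X) (a : A),
      Epmf (b y) (fun xτ => Qτ xτ a) - Q y a = γ * Epmf (P y a) Δ := by
    intro y a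
    have e1 : Epmf (b y) (fun xτ => Qτ xτ a)
        = R y a + γ * Epmf (P y a) (fun x' => Epmf (b x') Vτ) := by
      have e0 : (fun xτ => Qτ xτ a) = fun xτ => Rτ xτ a + γ * Epmf (Pτ xτ a) Vτ := by
        funext xτ; exact hQτ xτ a
      rw [e0, Epmf_add, Epmf_smul, ← hR, hcomm]
    have e2 : Epmf (P y a) Δ
        = Epmf (P y a) (fun x' => Epmf (b x') Vτ) - Epmf (P y a) V := by
      rw [hΔdef]; exact Epmf_sub _ _ _
    rw [e1, hQ, e2]; ring
  -- V as expectation of Q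
  have hVQ : ∀ y, V y = Epmf (π y) (fun a => Q y a) := by
    intro y; rw [hV]
    congr 1; funext a; rw [hQ]
  -- Step B : recursion for Δ
  have hB : ∀ y, Δ y = D y + γ * Epmf (π y) (fun a => Epmf (P y a) Δ) := by
    intro y
    have e1 : Epmf (b y) Vτ
        = Epmf (b y) (fun xτ => Epmf (πτ xτ) (fun a => Qτ xτ a)) := by
      congr 1; funext xτ; exact hVτ xτ
    have e2 : Epmf (b y) (fun xτ => Epmf (π y) (fun a => Qτ xτ a))
        = Epmf (π y) (fun a => Epmf (b y) (fun xτ => Qτ xτ a)) := Epmf_comm _ _ _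
    have e3 : Epmf (π y) (fun a => Epmf (b y) (fun xτ => Qτ xτ a) - Q y a)
        = Epmf (π y) (fun a => Epmf (b y) (fun xτ => Qτ xτ a))
          - Epmf (π y) (fun a => Q y a) := Epmf_sub _ _ _
    have e4 : Epmf (π y) (fun a => Epmf (b y) (fun xτ => Qτ xτ a) - Q y a)
        = γ * Epmf (π y) (fun a => Epmf (P y a) Δ) := by
      rw [← Epmf_smul]
      congr 1; funext a; exact hA y a
    have e5 : D y = Epmf (b y) (fun xτ => Epmf (πτ xτ) (fun a => Qτ xτ a))
        - Epmf (b y) (fun xτ => Epmf (π y) (fun a => Qτ xτ a)) := by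
      rw [hDdef]; exact Epmf_sub _ _ _
    have e6 : Δ y = Epmf (b y) Vτ - V y := by rw [hΔdef]
    rw [e6, e1, hVQ y]
    linarith [e2, e3, e4, e5]
  -- Step C : recursion for Φ
  have hC : ∀ y, Φ y = D y + γ * Epmf (π y) (fun a => Epmf (P y a) Φ) := by
    intro y
    have e1 : (fun a => Epmf (P y a) Φ)
        = fun a => (1 / (1 - γ)) * Epmf (P y a) (fun z => Epmf (d z) D) := by
      funext a; rw [hΦdef]; exact Epmf_smul _ _ _
    have e2 : Φ y = (1 / (1 - γ)) * Epmf (d y) D := by rw [hΦdef]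
    rw [e2, e1, Epmf_smul, hd y D]
    field_simp
  -- Δ = Φ
  have hΔΦ : ∀ y, Δ y = Φ y := by
    have hrec : ∀ y, (fun z => Δ z - Φ z) y
        = γ * Epmf (π y) (fun a => Epmf (P y a) (fun z => Δ z - Φ z)) := by
      intro y
      have e1 : (fun a => Epmf (P y a) (fun z => Δ z - Φ z))
          = fun a => Epmf (P y a) Δ - Epmf (P y a) Φ := by
        funext a; exact Epmf_sub _ _ _
      have e2 : Epmf (π y) (fun a => Epmf (P y a) Δ - Epmf (P y a) Φ)
          = Epmf (π y) (fun a => Epmf (P y a) Δ)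
            - Epmf (π y) (fun a => Epmf (P y a) Φ) := Epmf_sub _ _ _
      show Δ y - Φ y = _
      rw [e1, e2, hB y, hC y]; ring
    have h0 := fixpoint_zero hγ0 hγ1 π P (fun z => Δ z - Φ z) hrec
    intro y
    have h0y : Δ y - Φ y = 0 := h0 y
    linarith
  -- Final chain
  have l1 : Epmf (π x) (fun a => Epmf (b x) (fun xτ => Qτ xτ a) - Q x a)
      = γ * Epmf (π x) (fun a => Epmf (P x a) Δ) := by
    rw [← Epmf_smul]
    congr 1; funext a; exact hA x a
  have hΔΦfun : Δ = Φ := funext hΔΦ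
  have l2 : (fun a => Epmf (P x a) Φ)
      = fun a => (1 / (1 - γ)) * Epmf (P x a) (fun x' => Epmf (d x') D) := by
    funext a; rw [hΦdef]; exact Epmf_smul _ _ _
  have l3 : Epmf (π x) (fun a => Epmf (b x) (fun xτ => Qτ xτ a) - Q x a)
      = (γ / (1 - γ)) *
        Epmf (π x) (fun a => Epmf (P x a) (fun x' => Epmf (d x') D)) := by
    rw [l1, hΔΦfun, l2, Epmf_smul]
    ring
  -- pointwise bound on D
  have hDle : ∀ z, D z ≤ LQ * Epmf (b z) (fun xτ => W1 (πτ xτ) (π z)) := by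
    intro z
    have hpt : ∀ xτ, Epmf (πτ xτ) (fun a => Qτ xτ a) - Epmf (π z) (fun a => Qτ xτ a)
        ≤ LQ * W1 (πτ xτ) (π z) :=
      fun xτ => Epmf_diff_le_W1 _ _ _ _ (hLip xτ)
    have hDz : D z = Epmf (b z)
        (fun xτ => Epmf (πτ xτ) (fun a => Qτ xτ a) - Epmf (π z) (fun a => Qτ xτ a)) := by
      rw [hDdef]
    rw [hDz]
    calc Epmf (b z) (fun xτ =>
          Epmf (πτ xτ) (fun a => Qτ xτ a) - Epmf (π z) (fun a => Qτ xτ a))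
        ≤ Epmf (b z) (fun xτ => LQ * W1 (πτ xτ) (π z)) := Epmf_mono _ hpt
      _ = LQ * Epmf (b z) (fun xτ => W1 (πτ xτ) (π z)) := Epmf_smul _ _ _
  have m1 : Epmf (π x) (fun a => Epmf (P x a) (fun x' => Epmf (d x') D))
      ≤ Epmf (π x) (fun a => Epmf (P x a) (fun x' => Epmf (d x')
          (fun z => LQ * Epmf (b z) (fun xτ => W1 (πτ xτ) (π z))))) :=
    Epmf_mono _ fun a => Epmf_mono _ fun x' => Epmf_mono _ hDle
  have m2 : Epmf (π x) (fun a => Epmf (P x a) (fun x' => Epmf (d x')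
        (fun z => LQ * Epmf (b z) (fun xτ => W1 (πτ xτ) (π z)))))
      = LQ * Epmf (π x) (fun a => Epmf (P x a) (fun x' => Epmf (d x')
          (fun z => Epmf (b z) (fun xτ => W1 (πτ xτ) (π z))))) := by
    rw [← Epmf_smul]
    congr 1; funext a
    rw [← Epmf_smul]
    congr 1; funext x'
    exact Epmf_smul _ _ _
  have hcoef : (0:ℝ) ≤ γ / (1 - γ) := div_nonneg hγ0.le h1γ.le
  calc Epmf (π x) (fun a => Epmf (b x) (fun xτ => Qτ xτ a) - Q x a)
      = (γ / (1 - γ)) *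
          Epmf (π x) (fun a => Epmf (P x a) (fun x' => Epmf (d x') D)) := l3
    _ ≤ (γ / (1 - γ)) *
          (LQ * Epmf (π x) (fun a => Epmf (P x a) (fun x' => Epmf (d x')
            (fun z => Epmf (b z) (fun xτ => W1 (πτ xτ) (π z)))))) := by
        refine mul_le_mul_of_nonneg_left ?_ hcoef
        rw [← m2]; exact m1
    _ = (γ * LQ / (1 - γ)) *
          Epmf (π x) (fun a => Epmf (P x a) (fun x' => Epmf (d x')
            (fun xhat => Epmf (b xhat) (fun xhatτ => W1 (πτ xhatτ) (π xhat))))) := by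
        ring
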